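/- Consider the reduced system S' = μ − βMS − (μ+ν+γ)S + γ(1−M), M' = βMS − (δ+μ)M with positive parameters, and let (S*, M*) be an equilibrium with M* > 0, so that βS* = δ+μ and μ+γ = βM*S* + (μ+ν+γ)S* + γM*. Define V(S,M) = ½(S−S*)² + w(M − M* − M* ln(M/M*)) with w = (βS*+γ)/β. Then along any solution with S, M > 0, dV/dt ≤ −(βM + μ+ν+γ)(S−S*)² ≤ 0. -/

import Mathlib

/-- Lyapunov derivative bound for the SAIRS model with β_A = β_I = β and
δ_A = δ_I = δ, written in terms of M = A + I: with
w = (βS*+γ)/β, the derivative of V = ½(S−S*)² + w(M − M* − M* ln(M/M*))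
along solutions satisfies dV/dt ≤ −(βM + μ+ν+γ)(S−S*)² ≤ 0. -/
theorem SAIRS_equal_rates_lyapunov
    (μ ν γ β δ : ℝ)
    (hμ : 0 < μ) (hν : 0 < ν) (hγ : 0 < γ) (hβ : 0 < β) (hδ : 0 < δ)
    (Sstar Mstar : ℝ) (hSs : 0 < Sstar) (hMs : 0 < Mstar)
    (heq1 : β * Sstar = δ + μ)
    (heq2 : μ + γ = β * Mstar * Sstar + (μ + ν + γ) * Sstar + γ * Mstar)
    (S M : ℝ) (hS : 0 < S) (hM : 0 < M) :
    let w := (β * Sstar + γ) / β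
    let dV := (S - Sstar) * (μ - β * M * S - (μ + ν + γ) * S + γ * (1 - M))
      + w * (1 - Mstar / M) * (β * M * S - (δ + μ) * M)
    dV ≤ -(β * M + μ + ν + γ) * (S - Sstar) ^ 2 ∧
    -(β * M + μ + ν + γ) * (S - Sstar) ^ 2 ≤ 0 := by
  intro w dV
  have hβ' := hβ.ne'
  have hM' := hM.ne'
  have key : dV = -(β * M + μ + ν + γ) * (S - Sstar) ^ 2 := by
    show (S - Sstar) * (μ - β * M * S - (μ + ν + γ) * S + γ * (1 - M))
      + (β * Sstar + γ) / β * (1 - Mstar / M) * (β * M * S - (δ + μ) * M)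
      = -(β * M + μ + ν + γ) * (S - Sstar) ^ 2
    field_simp
    linear_combination (β * (S - Sstar)) * heq2
      + ((M - Mstar) * (β * Sstar + γ)) * heq1
  constructor
  · exact key.le
  · have h1 : 0 < β * M + μ + ν + γ := by positivity
    nlinarith [sq_nonneg (S - Sstar)]
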